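/- Every finite simple graph Γ on n vertices has at most 3^{n/3} maximal independent sets, i.e. mis(Γ) ≤ 3^{n/3}. -/

import Mathlib

/-- The number of maximal independent sets of a simple graph. -/
noncomputable def misSG {V : Type*} (Γ : SimpleGraph V) : ℕ :=
  Nat.card {I : Set V // (∀ x ∈ I, ∀ y ∈ I, ¬ Γ.Adj x y) ∧
    ∀ J : Set V, (∀ x ∈ J, ∀ y ∈ J, ¬ Γ.Adj x y) → I ⊆ J → I = J}

def IsMIS {V : Type*} (Γ : SimpleGraph V) (I : Set V) : Prop :=
  (∀ x ∈ I, ∀ y ∈ I, ¬ Γ.Adj x y) ∧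
    ∀ J : Set V, (∀ x ∈ J, ∀ y ∈ J, ¬ Γ.Adj x y) → I ⊆ J → I = J

lemma misSG_eq {V : Type*} (Γ : SimpleGraph V) : misSG Γ = Nat.card {I // IsMIS Γ I} := rfl

lemma cube_le_pow : ∀ k : ℕ, k ^ 3 ≤ 3 ^ k := by
  have step : ∀ k, 3 ≤ k → k ^ 3 ≤ 3 ^ k → (k+1) ^ 3 ≤ 3 ^ (k+1) := by
    intro k hk ih
    have : (k+1)^3 ≤ 3 * k^3 := by nlinarith [sq_nonneg k, hk]
    calc (k+1)^3 ≤ 3 * k^3 := this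
      _ ≤ 3 * 3 ^ k := by omega
      _ = 3 ^ (k+1) := by ring
  intro k
  induction k with
  | zero => norm_num
  | succ n ih =>
    match n, ih with
    | 0, _ => norm_num
    | 1, _ => norm_num
    | 2, _ => norm_num
    | (m+3), ih => exact step _ (by omega) ih

section Aux
variable {V : Type*} {Γ : SimpleGraph V}


/-- Every MIS meets every closed neighborhood. -/
lemma mis_hits (v : V) {I : Set V} (hI : IsMIS Γ I) :
    ∃ u ∈ insert v (Γ.neighborSet v), u ∈ I := by
  by_contra h
  push_neg at h
  have hvI : v ∉ I := h v (Set.mem_insert _ _)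
  have hind : ∀ x ∈ insert v I, ∀ y ∈ insert v I, ¬ Γ.Adj x y := by
    intro x hx y hy
    rcases hx with rfl | hx
    · rcases hy with rfl | hy
      · exact Γ.irrefl
      · intro hadj
        exact h y (Set.mem_insert_iff.2 (Or.inr hadj)) hy
    · rcases hy with rfl | hy
      · intro hadj
        exact h x (Set.mem_insert_iff.2 (Or.inr (Γ.adj_symm hadj))) hx
      · exact hI.1 x hx y hy
  have := hI.2 _ hind (Set.subset_insert _ _)
  exact hvI (this ▸ Set.mem_insert v I)

/-- Restricting an MIS containing `u` to the complement of `N[u]`. -/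
lemma mis_restrict {u : V} {I : Set V} (hI : IsMIS Γ I) (hu : u ∈ I) :
    IsMIS (Γ.induce (insert u (Γ.neighborSet u))ᶜ) (Subtype.val ⁻¹' I) ∧
      I = insert u (Subtype.val '' (Subtype.val ⁻¹' I :
        Set ↥(insert u (Γ.neighborSet u))ᶜ)) := by
  set s : Set V := (insert u (Γ.neighborSet u))ᶜ with hs
  have hIeq : I = insert u (Subtype.val '' (Subtype.val ⁻¹' I : Set ↥s)) := by
    apply Set.Subset.antisymm
    · intro x hx
      by_cases hxu : x = u
      · exact hxu ▸ Set.mem_insert _ _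
      · have hxs : x ∈ s := by
          simp only [hs, Set.mem_compl_iff, Set.mem_insert_iff, SimpleGraph.mem_neighborSet]
          push_neg
          exact ⟨hxu, hI.1 u hu x hx⟩
        exact Set.mem_insert_iff.2 (Or.inr ⟨⟨x, hxs⟩, hx, rfl⟩)
    · intro x hx
      rcases hx with rfl | ⟨y, hy, rfl⟩
      · exact hu
      · exact hy
  refine ⟨⟨?_, ?_⟩, hIeq⟩
  · intro x hx y hy hadj
    exact hI.1 x hx y hy hadj
  · intro K hK hJK
    have hK'ind : ∀ x ∈ insert u (Subtype.val '' K), ∀ y ∈ insert u (Subtype.val '' K),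
        ¬ Γ.Adj x y := by
      have hns : ∀ z : ↥s, ¬ Γ.Adj u ↑z := by
        intro z hadj
        exact z.2 (Set.mem_insert_iff.2 (Or.inr hadj))
      intro x hx y hy
      rcases hx with rfl | ⟨a, ha, rfl⟩
      · rcases hy with rfl | ⟨b, hb, rfl⟩
        · exact Γ.irrefl
        · exact hns b
      · rcases hy with rfl | ⟨b, hb, rfl⟩
        · intro hadj; exact hns a (Γ.adj_symm hadj)
        · exact hK a ha b hb
    have hIK' : I ⊆ insert u (Subtype.val '' K) := by
      rw [hIeq]
      exact Set.insert_subset_insert (Set.image_mono hJK)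
    have hIK'eq := hI.2 _ hK'ind hIK'
    ext k
    constructor
    · exact fun h => hJK h
    · intro hk
      have : (k : V) ∈ I := by
        rw [hIK'eq]
        exact Set.mem_insert_iff.2 (Or.inr ⟨k, hk, rfl⟩)
      exact this

end Aux

lemma key : ∀ (n : ℕ) (V : Type) [Finite V], Nat.card V = n →
    ∀ Γ : SimpleGraph V, (misSG Γ) ^ 3 ≤ 3 ^ n := by
  intro n
  induction n using Nat.strong_induction_on with
  | _ n IH =>
  intro V _ hcard Γ
  rcases Nat.eq_zero_or_pos n with rfl | hn
  · -- V is empty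
    have hVe : IsEmpty V := by
      rcases Nat.card_eq_zero.mp hcard with h | h
      · exact h
      · exact absurd ‹Finite V› h.not_finite
    have hsub : Subsingleton (Set V) := ⟨fun s t => Set.ext fun x => hVe.elim x⟩
    have : Subsingleton {I // IsMIS Γ I} := ⟨fun a b => Subtype.ext (hsub.allEq _ _)⟩
    have h1 : misSG Γ ≤ 1 := by
      rw [misSG_eq]
      rcases isEmpty_or_nonempty {I // IsMIS Γ I} with he | hne
      · simp [Nat.card_of_isEmpty]
      · obtain ⟨a⟩ := hne
        exact le_of_eq (Nat.card_of_subsingleton a)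
    calc misSG Γ ^ 3 ≤ 1 ^ 3 := Nat.pow_le_pow_left h1 3
      _ ≤ 3 ^ 0 := by norm_num
  · -- V nonempty
    have hne : Nonempty V := (Nat.card_pos_iff.mp (hcard ▸ hn)).1
    classical
    obtain ⟨v, hv⟩ := Finite.exists_min (fun u : V => (Γ.neighborSet u).ncard)
    set N : V → Set V := fun u => insert u (Γ.neighborSet u) with hNdef
    have hNmem : ∀ u, u ∈ N u := fun u => Set.mem_insert _ _
    have hNcard : ∀ u, (N u).ncard = (Γ.neighborSet u).ncard + 1 := fun u =>
      Set.ncard_insert_of_notMem (SimpleGraph.notMem_neighborSet_self Γ)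
    set k : ℕ := (N v).ncard with hkdef
    have hk_le : ∀ u, k ≤ (N u).ncard := by
      intro u; rw [hkdef, hNcard, hNcard]; exact Nat.succ_le_succ (hv u)
    have hk_pos : 1 ≤ k := by rw [hkdef, hNcard]; omega
    have hk_le_n : k ≤ n := by
      calc k ≤ (Set.univ : Set V).ncard := Set.ncard_le_ncard (Set.subset_univ _) (Set.toFinite _)
        _ = n := by rw [Set.ncard_univ, hcard]
    -- fiber bound
    have hfiber : ∀ u : V, (misSG (Γ.induce (N u)ᶜ)) ^ 3 ≤ 3 ^ (n - k) := by
      intro u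
      have hcompl : Nat.card ↥((N u)ᶜ) = n - (N u).ncard := by
        rw [Nat.card_coe_set_eq]
        have := Set.ncard_add_ncard_compl (N u)
        omega
      have hlt : n - (N u).ncard < n := by
        have := hk_le u; omega
      calc (misSG (Γ.induce (N u)ᶜ)) ^ 3 ≤ 3 ^ (n - (N u).ncard) :=
            IH _ hlt _ hcompl _
        _ ≤ 3 ^ (n - k) := Nat.pow_le_pow_right (by norm_num) (by have := hk_le u; omega)
    -- the injection
    set T : ↥(N v) → Type := fun u => {J // IsMIS (Γ.induce (N ↑u)ᶜ) J} with hTdef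
    have hTcard : ∀ u : ↥(N v), Nat.card (T u) = misSG (Γ.induce (N ↑u)ᶜ) := fun u => rfl
    set f : {I // IsMIS Γ I} → Σ u : ↥(N v), T u := fun p =>
      ⟨⟨Classical.choose (mis_hits v p.2), (Classical.choose_spec (mis_hits v p.2)).1⟩,
        ⟨Subtype.val ⁻¹' p.1,
          (mis_restrict p.2 (Classical.choose_spec (mis_hits v p.2)).2).1⟩⟩ with hfdef
    set g : (Σ u : ↥(N v), T u) → Set V := fun q =>
      insert (↑q.1) (Subtype.val '' (↑q.2 : Set ↥((N ↑q.1)ᶜ))) with hgdef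
    have hgf : ∀ p, g (f p) = ↑p := by
      intro p
      exact ((mis_restrict p.2 (Classical.choose_spec (mis_hits v p.2)).2).2).symm
    have hinj : Function.Injective f := by
      intro p q h
      exact Subtype.ext (by rw [← hgf p, ← hgf q, h])
    have hle1 : misSG Γ ≤ Nat.card (Σ u : ↥(N v), T u) := by
      rw [misSG_eq]
      exact Nat.card_le_card_of_injective f hinj
    -- bound the sigma
    have hNne : Nonempty ↥(N v) := ⟨⟨v, hNmem v⟩⟩
    obtain ⟨u₀, hu₀⟩ := Finite.exists_max (fun u : ↥(N v) => Nat.card (T u))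
    set B : ℕ := Nat.card (T u₀) with hBdef
    letI : Fintype ↥(N v) := Fintype.ofFinite _
    letI : ∀ u : ↥(N v), Fintype (T u) := fun u => Fintype.ofFinite _
    have hcardNv : Fintype.card ↥(N v) = k := by
      rw [← Nat.card_eq_fintype_card, Nat.card_coe_set_eq]
    have hle2 : Nat.card (Σ u : ↥(N v), T u) ≤ k * B := by
      rw [Nat.card_eq_fintype_card, Fintype.card_sigma]
      calc ∑ u : ↥(N v), Fintype.card (T u) ≤ Fintype.card ↥(N v) * B := by
            rw [← smul_eq_mul]
            apply Finset.sum_le_card_nsmul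
            intro u _
            rw [← Nat.card_eq_fintype_card]
            exact hu₀ u
        _ = k * B := by rw [hcardNv]
    have hB3 : B ^ 3 ≤ 3 ^ (n - k) := by
      rw [hBdef, hTcard]; exact hfiber _
    calc misSG Γ ^ 3 ≤ (k * B) ^ 3 := Nat.pow_le_pow_left (hle1.trans hle2) 3
      _ = k ^ 3 * B ^ 3 := by ring
      _ ≤ 3 ^ k * 3 ^ (n - k) := Nat.mul_le_mul (cube_le_pow k) hB3
      _ = 3 ^ n := by rw [← pow_add]; congr 1; omega

/-- Moon–Moser: a finite simple graph on `n` vertices has at most `3 ^ (n/3)`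
maximal independent sets. -/
theorem moon_moser (V : Type) [Fintype V] (Γ : SimpleGraph V) :
    (misSG Γ : ℝ) ≤ 3 ^ ((Fintype.card V : ℝ) / 3) := by
  set n := Fintype.card V with hn
  have hkey : (misSG Γ) ^ 3 ≤ 3 ^ n := key n V (Nat.card_eq_fintype_card) Γ
  have h : ((misSG Γ : ℝ)) ^ (3:ℕ) ≤ (3:ℝ) ^ (n:ℕ) := by exact_mod_cast hkey
  have h0 : (0:ℝ) ≤ (misSG Γ : ℝ) := Nat.cast_nonneg _
  have hm : (misSG Γ : ℝ) = ((misSG Γ : ℝ) ^ (3:ℕ)) ^ ((1:ℝ)/3) := by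
    rw [← Real.rpow_natCast (misSG Γ : ℝ) 3, ← Real.rpow_mul h0]
    norm_num
  have hr : ((3:ℝ) ^ (n:ℕ)) ^ ((1:ℝ)/3) = (3:ℝ) ^ ((n:ℝ)/3) := by
    rw [← Real.rpow_natCast (3:ℝ) n, ← Real.rpow_mul (by norm_num)]
    ring_nf
  calc (misSG Γ : ℝ) = ((misSG Γ : ℝ) ^ (3:ℕ)) ^ ((1:ℝ)/3) := hm
    _ ≤ ((3:ℝ) ^ (n:ℕ)) ^ ((1:ℝ)/3) := Real.rpow_le_rpow (by positivity) h (by norm_num)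
    _ = (3:ℝ) ^ ((n:ℝ)/3) := hr
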